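/- Let p be a prime, S ⊆ ℤ_p, and m ≤ |S| a positive integer. If R ⊆ S is a uniformly random subset of S of size m, then for every z ∈ ℤ_p, the probability that the sum of elements of R equals z is at most 1/(|S| - m + 1). -/

import Mathlib

/-- The probability that a uniformly random subset `R ⊆ S` of size `m` has `Σ(R) = z`,
computed as a ratio of counts. -/
noncomputable def probSum (p : ℕ) (S : Finset (ZMod p)) (m : ℕ) (z : ZMod p) : ℝ :=
  (((S.powersetCard m).filter fun R => ∑ x ∈ R, x = z).card : ℝ) /
    ((S.powersetCard m).card : ℝ)

theorem stmt5 (p : ℕ) [Fact p.Prime] (S : Finset (ZMod p)) (m : ℕ)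
    (hm : 0 < m) (hmS : m ≤ S.card) (z : ZMod p) :
    probSum p S m z ≤ 1 / ((S.card : ℝ) - m + 1) := by
  classical
  set A := (S.powersetCard m).filter fun R => ∑ x ∈ R, x = z with hA
  -- key counting: A.card * m ≤ S.card.choose (m-1)
  have key : A.card * m ≤ S.card.choose (m - 1) := by
    have hcard : (A.sigma fun R => (R : Finset (ZMod p))).card = A.card * m := by
      rw [Finset.card_sigma]
      rw [Finset.sum_congr rfl (fun R hR => ?_), Finset.sum_const, smul_eq_mul]
      have := (Finset.mem_powersetCard.mp (Finset.mem_filter.mp hR).1).2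
      exact this
    have hinj : ∀ x ∈ A.sigma (fun R => (R : Finset (ZMod p))),
        (x.1.erase x.2) ∈ S.powersetCard (m - 1) := by
      rintro ⟨R, a⟩ hx
      obtain ⟨hR, ha⟩ := Finset.mem_sigma.mp hx
      obtain ⟨hRS, hRc⟩ := Finset.mem_powersetCard.mp (Finset.mem_filter.mp hR).1
      refine Finset.mem_powersetCard.mpr ⟨(Finset.erase_subset _ _).trans hRS, ?_⟩
      rw [Finset.card_erase_of_mem ha, hRc]
    have hle : (A.sigma fun R => (R : Finset (ZMod p))).card ≤
        (S.powersetCard (m - 1)).card := by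
      apply Finset.card_le_card_of_injOn (fun x => x.1.erase x.2) (fun x hx => hinj x hx)
      rintro ⟨R₁, a₁⟩ h₁ ⟨R₂, a₂⟩ h₂ he
      obtain ⟨hR₁, ha₁⟩ := Finset.mem_sigma.mp h₁
      obtain ⟨hR₂, ha₂⟩ := Finset.mem_sigma.mp h₂
      have hs₁ : ∑ x ∈ R₁, x = z := (Finset.mem_filter.mp hR₁).2
      have hs₂ : ∑ x ∈ R₂, x = z := (Finset.mem_filter.mp hR₂).2
      simp only at he
      have hsum : z - a₁ = z - a₂ := by
        have e1 : ∑ x ∈ R₁.erase a₁, x = z - a₁ := by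
          rw [Finset.sum_erase_eq_sub ha₁, hs₁]
        have e2 : ∑ x ∈ R₂.erase a₂, x = z - a₂ := by
          rw [Finset.sum_erase_eq_sub ha₂, hs₂]
        rw [← e1, ← e2, he]
      have haa : a₁ = a₂ := sub_right_injective hsum
      simp only at ha₁ ha₂
      have hRR : R₁ = R₂ := by
        rw [← Finset.insert_erase ha₁, he, haa, Finset.insert_erase ha₂]
      subst haa; subst hRR; rfl
    calc A.card * m = _ := hcard.symm
      _ ≤ (S.powersetCard (m - 1)).card := hle
      _ = S.card.choose (m - 1) := S.card_powersetCard (m-1)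
  -- arithmetic
  have hCpos : 0 < S.card.choose m := Nat.choose_pos hmS
  have hident : S.card.choose m * m = S.card.choose (m - 1) * (S.card - m + 1) := by
    have h1 : m - 1 + 1 = m := Nat.succ_pred_eq_of_pos hm
    have := Nat.choose_succ_right_eq S.card (m - 1)
    rw [h1] at this
    rw [this]
    congr 1
    omega
  have hnat : A.card * (S.card - m + 1) ≤ S.card.choose m := by
    have h2 : A.card * (S.card - m + 1) * m ≤ S.card.choose m * m := by
      calc A.card * (S.card - m + 1) * m = (A.card * m) * (S.card - m + 1) := by ring
        _ ≤ S.card.choose (m - 1) * (S.card - m + 1) := by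
            exact Nat.mul_le_mul_right _ key
        _ = S.card.choose m * m := hident.symm
    exact Nat.le_of_mul_le_mul_right h2 hm
  rw [probSum, S.card_powersetCard m]
  have hd : (0:ℝ) < (S.card : ℝ) - m + 1 := by
    have : (m:ℝ) ≤ S.card := by exact_mod_cast hmS
    linarith
  rw [div_le_div_iff₀ (by exact_mod_cast hCpos) hd, one_mul]
  have : ((S.card : ℝ) - m + 1) = ((S.card - m + 1 : ℕ) : ℝ) := by
    push_cast [Nat.cast_sub hmS]; ring
  rw [this]
  exact_mod_cast hnat
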